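/- Fix real numbers λ > 0, θ > 0, ν > 0 and N0 > 0, and set β = ⌊1/θ⌋ and α = 1/θ − β. Define, for P̄ > 0, C̄(P̄) = (2θ/λ) · [ α·log( 1 + (β+1)·λ·P̄·ν/(2N0) ) + (1−α)·log( 1 + β·λ·P̄·ν/(2N0) ) ]. Then lim_{P̄→∞} C̄(P̄)/log(P̄/N0) = 2/λ if θ ≥ 1, and equals 2θ/λ if 0 < θ < 1. -/

import Mathlib

open Real Filter

lemma ratio_log_lim (c N0 : ℝ) (hc : 0 < c) (hN0 : 0 < N0) :
    Tendsto (fun P : ℝ => Real.log (1 + c * P) / Real.log (P / N0)) atTop (nhds 1) := by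
  have hden : Tendsto (fun P : ℝ => Real.log P - Real.log N0) atTop atTop := by
    simpa [sub_eq_add_neg] using tendsto_atTop_add_const_right atTop (-Real.log N0) tendsto_log_atTop
  have hin : Tendsto (fun P : ℝ => 1 / P + c) atTop (nhds c) := by
    simpa using (tendsto_inv_atTop_zero (𝕜 := ℝ)).add (tendsto_const_nhds (x := c))
  have hnum : Tendsto (fun P : ℝ => Real.log (1 / P + c) + Real.log N0) atTop
      (nhds (Real.log c + Real.log N0)) :=
    ((Real.continuousAt_log (ne_of_gt hc)).tendsto.comp hin).add tendsto_const_nhds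
  have h0 : Tendsto (fun P : ℝ => (Real.log (1 / P + c) + Real.log N0) /
      (Real.log P - Real.log N0)) atTop (nhds 0) := hnum.div_atTop hden
  have h1 : Tendsto (fun P : ℝ => 1 + (Real.log (1 / P + c) + Real.log N0) /
      (Real.log P - Real.log N0)) atTop (nhds 1) := by
    simpa using (tendsto_const_nhds (x := (1:ℝ)) (f := atTop)).add h0
  refine h1.congr' ?_
  filter_upwards [eventually_gt_atTop (max N0 1)] with P hP
  have hP1 : (1:ℝ) < P := lt_of_le_of_lt (le_max_right _ _) hP
  have hP0 : (0:ℝ) < P := lt_trans one_pos hP1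
  have hPN : N0 < P := lt_of_le_of_lt (le_max_left _ _) hP
  have hdne : Real.log P - Real.log N0 ≠ 0 := by
    have : Real.log N0 < Real.log P := Real.log_lt_log hN0 hPN
    linarith
  have harg : 1 + c * P = P * (1 / P + c) := by field_simp
  have hlog : Real.log (1 + c * P) = Real.log P + Real.log (1 / P + c) := by
    rw [harg, Real.log_mul (ne_of_gt hP0) (by positivity)]
  rw [Real.log_div (ne_of_gt hP0) (ne_of_gt hN0), hlog]
  field_simp
  ring

lemma ratio_log_lim' (k lam ν N0 : ℝ) (hk : 0 < k) (hlam : 0 < lam) (hν : 0 < ν)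
    (hN0 : 0 < N0) :
    Tendsto (fun P : ℝ => Real.log (1 + k * lam * P * ν / (2 * N0)) / Real.log (P / N0))
      atTop (nhds 1) := by
  have h := ratio_log_lim (k * lam * ν / (2 * N0)) N0 (by positivity) hN0
  refine h.congr fun P => ?_
  rw [show k * lam * ν / (2 * N0) * P = k * lam * P * ν / (2 * N0) by ring]

lemma F_tendsto (lam θ ν N0 L2 : ℝ) (hlam : 0 < lam) (hθ : 0 < θ) (hν : 0 < ν) (hN0 : 0 < N0)
    (h2 : Tendsto (fun P : ℝ =>
        Real.log (1 + (⌊1 / θ⌋ : ℝ) * lam * P * ν / (2 * N0)) / Real.log (P / N0))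
      atTop (nhds L2)) :
    Tendsto (fun P : ℝ =>
        ((2 * θ / lam) *
          ((1 / θ - (⌊1 / θ⌋ : ℝ)) *
              Real.log (1 + ((⌊1 / θ⌋ : ℝ) + 1) * lam * P * ν / (2 * N0))
            + (1 - (1 / θ - (⌊1 / θ⌋ : ℝ))) *
              Real.log (1 + (⌊1 / θ⌋ : ℝ) * lam * P * ν / (2 * N0))))
          / Real.log (P / N0))
      atTop
      (nhds ((2 * θ / lam) *
        ((1 / θ - (⌊1 / θ⌋ : ℝ)) * 1 + (1 - (1 / θ - (⌊1 / θ⌋ : ℝ))) * L2))) := by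
  have hβ : (0:ℝ) ≤ (⌊1 / θ⌋ : ℝ) := by
    exact_mod_cast Int.floor_nonneg.mpr (le_of_lt (by positivity : (0:ℝ) < 1 / θ))
  have h1 := ratio_log_lim' ((⌊1 / θ⌋ : ℝ) + 1) lam ν N0 (by linarith) hlam hν hN0
  have h := ((h1.const_mul (1 / θ - (⌊1 / θ⌋ : ℝ))).add
      (h2.const_mul (1 - (1 / θ - (⌊1 / θ⌋ : ℝ))))).const_mul (2 * θ / lam)
  refine h.congr fun P => ?_
  ring

theorem signal_dimensions_per_meter_1D (lam θ ν N0 : ℝ)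
    (hlam : 0 < lam) (hθ : 0 < θ) (hν : 0 < ν) (hN0 : 0 < N0) :
    (1 ≤ θ →
      Tendsto (fun Pbar : ℝ =>
          ((2 * θ / lam) *
            ((1 / θ - (⌊1 / θ⌋ : ℝ)) *
                Real.log (1 + ((⌊1 / θ⌋ : ℝ) + 1) * lam * Pbar * ν / (2 * N0))
              + (1 - (1 / θ - (⌊1 / θ⌋ : ℝ))) *
                Real.log (1 + (⌊1 / θ⌋ : ℝ) * lam * Pbar * ν / (2 * N0))))
            / Real.log (Pbar / N0))
        atTop (nhds (2 / lam))) ∧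
    (θ < 1 →
      Tendsto (fun Pbar : ℝ =>
          ((2 * θ / lam) *
            ((1 / θ - (⌊1 / θ⌋ : ℝ)) *
                Real.log (1 + ((⌊1 / θ⌋ : ℝ) + 1) * lam * Pbar * ν / (2 * N0))
              + (1 - (1 / θ - (⌊1 / θ⌋ : ℝ))) *
                Real.log (1 + (⌊1 / θ⌋ : ℝ) * lam * Pbar * ν / (2 * N0))))
            / Real.log (Pbar / N0))
        atTop (nhds (2 * θ / lam))) := by
  constructor
  · intro hθ1
    rcases eq_or_lt_of_le hθ1 with heq | hgt
    · -- θ = 1 : β = 1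
      subst heq
      have hfl : (⌊1 / (1:ℝ)⌋ : ℝ) = 1 := by norm_num
      have h2 : Tendsto (fun P : ℝ =>
          Real.log (1 + (⌊1 / (1:ℝ)⌋ : ℝ) * lam * P * ν / (2 * N0)) / Real.log (P / N0))
          atTop (nhds 1) := by
        rw [hfl] at *
        exact ratio_log_lim' 1 lam ν N0 one_pos hlam hν hN0
      have key := F_tendsto lam 1 ν N0 1 hlam one_pos hν hN0 h2
      have hc : (2 * 1 / lam) *
          ((1 / (1:ℝ) - (⌊1 / (1:ℝ)⌋ : ℝ)) * 1 + (1 - (1 / (1:ℝ) - (⌊1 / (1:ℝ)⌋ : ℝ))) * 1)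
          = 2 / lam := by rw [hfl]; ring
      rw [hc] at key
      exact key
    · -- θ > 1 : β = 0
      have h1θ : 1 / θ < 1 := by
        rw [div_lt_one hθ]; exact hgt
      have hfl : ⌊1 / θ⌋ = 0 := by
        apply Int.floor_eq_zero_iff.mpr
        constructor
        · positivity
        · exact h1θ
      have hflR : (⌊1 / θ⌋ : ℝ) = 0 := by rw [hfl]; norm_num
      have h2 : Tendsto (fun P : ℝ =>
          Real.log (1 + (⌊1 / θ⌋ : ℝ) * lam * P * ν / (2 * N0)) / Real.log (P / N0))
          atTop (nhds 0) := by
        simp only [hflR, zero_mul, zero_div, add_zero, Real.log_one]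
        simpa using tendsto_const_nhds
      have key := F_tendsto lam θ ν N0 0 hlam hθ hν hN0 h2
      have hc : (2 * θ / lam) *
          ((1 / θ - (⌊1 / θ⌋ : ℝ)) * 1 + (1 - (1 / θ - (⌊1 / θ⌋ : ℝ))) * 0) = 2 / lam := by
        rw [hflR]
        field_simp
        ring
      rw [hc] at key
      exact key
  · intro hθ1
    have h1θ : (1:ℝ) ≤ 1 / θ := by
      rw [le_div_iff₀ hθ]; linarith
    have hfl : 1 ≤ ⌊1 / θ⌋ := by
      exact_mod_cast Int.le_floor.mpr (by exact_mod_cast h1θ)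
    have hflR : (1:ℝ) ≤ (⌊1 / θ⌋ : ℝ) := by exact_mod_cast hfl
    have h2 : Tendsto (fun P : ℝ =>
        Real.log (1 + (⌊1 / θ⌋ : ℝ) * lam * P * ν / (2 * N0)) / Real.log (P / N0))
        atTop (nhds 1) :=
      ratio_log_lim' _ lam ν N0 (by linarith) hlam hν hN0
    have key := F_tendsto lam θ ν N0 1 hlam hθ hν hN0 h2
    have hc : (2 * θ / lam) *
        ((1 / θ - (⌊1 / θ⌋ : ℝ)) * 1 + (1 - (1 / θ - (⌊1 / θ⌋ : ℝ))) * 1) = 2 * θ / lam := by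
      ring
    rw [hc] at key
    exact key
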